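/- If P(x) ∈ ℚ[x] is irreducible over ℚ and integer-valued (i.e., P(k) ∈ ℤ for all k ∈ ℤ), then M(P) ≥ 1. -/

import Mathlib

open Polynomial

/-- The Mahler measure of a complex polynomial `P = c ∏ (X - αⱼ)` :
`M(P) = |c| ∏ max 1 |αⱼ|`. -/
noncomputable def mahlerMeasure (P : Polynomial ℂ) : ℝ :=
  ‖P.leadingCoeff‖ * ((P.roots.map (fun a => max 1 ‖a‖)).prod)

lemma aux_prod_le (s : Multiset ℂ) :
    (s.map (fun a => ‖a‖)).prod ≤ (s.map (fun a => max 1 ‖a‖)).prod := by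
  induction s using Multiset.induction with
  | empty => simp
  | cons a s ih =>
    simp only [Multiset.map_cons, Multiset.prod_cons]
    refine mul_le_mul (le_max_right _ _) ih ?_ ?_
    · exact Multiset.prod_nonneg (by
        intro x hx
        obtain ⟨b, -, rfl⟩ := Multiset.mem_map.mp hx
        exact norm_nonneg _)
    · exact le_trans zero_le_one (le_max_left _ _)

lemma abs_eval_zero_le (Q : Polynomial ℂ) (hQ : Q ≠ 0) :
    ‖Q.eval 0‖ ≤ _root_.mahlerMeasure Q := by
  have hsplit : Q.Splits := IsAlgClosed.splits Q
  have hfact := hsplit.eq_prod_roots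
  have h0 : Q.eval 0 = Q.leadingCoeff * (Q.roots.map (fun a => (0 : ℂ) - a)).prod := by
    conv_lhs => rw [hfact]
    simp [eval_multiset_prod, Multiset.map_map, Function.comp]
  have habs : ‖Q.eval 0‖
      = ‖Q.leadingCoeff‖ * (Q.roots.map (fun a => ‖a‖)).prod := by
    rw [h0, norm_mul, (by exact map_multiset_prod (normHom (α := ℂ)) (Q.roots.map (fun a => (0 : ℂ) - a)) :
      ‖(Q.roots.map (fun a => (0 : ℂ) - a)).prod‖
        = ((Q.roots.map (fun a => (0 : ℂ) - a)).map (fun x => ‖x‖)).prod), Multiset.map_map]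
    congr 1
    congr 1
    ext a
    simp
  rw [habs, _root_.mahlerMeasure]
  exact mul_le_mul_of_nonneg_left (aux_prod_le _) (norm_nonneg _)

theorem mahler_ge_one_of_irreducible_integer_valued (P : Polynomial ℚ)
    (hirr : Irreducible P) (hdeg : 1 ≤ P.natDegree)
    (hint : ∀ k : ℤ, ∃ m : ℤ, P.eval (k : ℚ) = (m : ℚ)) :
    1 ≤ _root_.mahlerMeasure (P.map (algebraMap ℚ ℂ)) := by
  have hP0 : P ≠ 0 := hirr.ne_zero
  set Q := P.map (algebraMap ℚ ℂ) with hQdef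
  have hQ0 : Q ≠ 0 := by
    simpa [hQdef] using (Polynomial.map_ne_zero_iff (f := algebraMap ℚ ℂ)
      (algebraMap ℚ ℂ).injective).mpr hP0
  by_cases h0 : P.eval 0 = 0
  · -- P has root 0, so P = X * C c
    have hXdvd : X - C (0 : ℚ) ∣ P := (dvd_iff_isRoot).mpr h0
    rw [map_zero, sub_zero] at hXdvd
    obtain ⟨q, hq⟩ := hXdvd
    rcases hirr.isUnit_or_isUnit hq with hu | hu
    · exact absurd hu (not_isUnit_X)
    · obtain ⟨c, hcu, hc⟩ := Polynomial.isUnit_iff.mp hu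
      have hc0 : c ≠ 0 := hcu.ne_zero
      have hPeq : P = X * C c := by rw [hq, ← hc]
      obtain ⟨m, hm⟩ := hint 1
      have hcm : c = (m : ℚ) := by
        have := hm
        rw [hPeq] at this
        simpa using this
      have hm0 : m ≠ 0 := by
        rintro rfl
        simp at hcm
        exact hc0 hcm
      have hQeq : Q = X * C ((algebraMap ℚ ℂ) c) := by
        rw [hQdef, hPeq]
        simp [Polynomial.map_mul]
      have hlc : Q.leadingCoeff = (algebraMap ℚ ℂ) c := by
        rw [hQeq, mul_comm, leadingCoeff_C_mul_X]
      have hroots : Q.roots = {0} := by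
        rw [hQeq, mul_comm, roots_C_mul _ (by simpa using hc0), roots_X]
      rw [_root_.mahlerMeasure, hlc, hroots]
      simp only [Multiset.map_singleton, Multiset.prod_singleton, map_zero, norm_zero, max_eq_left zero_le_one,
        mul_one]
      have : ‖(algebraMap ℚ ℂ) c‖ = |(m : ℝ)| := by
        rw [hcm]
        simp [Complex.norm_intCast]
      rw [this]
      exact_mod_cast Int.one_le_abs hm0
  · obtain ⟨m, hm⟩ := hint 0
    have hm0 : m ≠ 0 := by
      rintro rfl
      simp at hm
      exact h0 hm
    have hQeval : Q.eval 0 = (algebraMap ℚ ℂ) (P.eval 0) := by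
      rw [hQdef]
      have := Polynomial.eval₂_at_apply (algebraMap ℚ ℂ) (p := P) 0
      simpa [eval_map] using this
    have h1 : (1 : ℝ) ≤ ‖Q.eval 0‖ := by
      rw [hQeval]
      push_cast at hm
      rw [hm]
      have : ‖(algebraMap ℚ ℂ) (m : ℚ)‖ = |(m : ℝ)| := by
        simp [Complex.norm_intCast]
      rw [this]
      exact_mod_cast Int.one_le_abs hm0
    exact le_trans h1 (abs_eval_zero_le Q hQ0)
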